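/- The second derivative of f_{AL}(x) = (x+1)/2 - (x-1)/ln x (for x > 0, x ≠ 1) equals ((x+1)ln x - 2(x-1))/(x²(ln x)³), and this is positive for all x > 0, x ≠ 1. -/

import Mathlib

noncomputable def fAL (x : ℝ) : ℝ := (x + 1) / 2 - (x - 1) / Real.log x

open Real Set Filter

lemma log_ne_zero' {x : ℝ} (hx : 0 < x) (hx1 : x ≠ 1) : Real.log x ≠ 0 := by
  rcases lt_or_gt_of_ne hx1 with h | h
  · exact (Real.log_neg hx h).ne
  · exact (Real.log_pos h).ne'

lemma hasDerivAt_fAL {x : ℝ} (hx : 0 < x) (hx1 : x ≠ 1) :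
    HasDerivAt fAL (1/2 - (Real.log x - (x - 1) / x) / (Real.log x) ^ 2) x := by
  have hL : Real.log x ≠ 0 := log_ne_zero' hx hx1
  have h1 : HasDerivAt (fun y : ℝ => (y + 1) / 2) (1/2) x := by
    simpa using ((hasDerivAt_id x).add_const 1).div_const 2
  have h2 : HasDerivAt (fun y : ℝ => (y - 1) / Real.log y)
      ((1 * Real.log x - (x - 1) * (1 / x)) / (Real.log x) ^ 2) x :=
    ((hasDerivAt_id x).sub_const 1).div (by simpa using Real.hasDerivAt_log hx.ne') hL
  have := h1.sub h2
  exact this.congr_deriv (by simp [div_eq_mul_inv])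

lemma deriv_fAL {x : ℝ} (hx : 0 < x) (hx1 : x ≠ 1) :
    deriv fAL x = 1/2 - (Real.log x - (x - 1) / x) / (Real.log x) ^ 2 :=
  (hasDerivAt_fAL hx hx1).deriv

lemma hprime_pos {y : ℝ} (hy : 0 < y) (hy1 : y ≠ 1) :
    0 < Real.log y + (y + 1) * (1 / y) - 2 * 1 := by
  have hne : 1 / y ≠ 1 := by
    intro h
    apply hy1
    field_simp at h
    linarith
  have h : Real.log (1 / y) < 1 / y - 1 :=
    Real.log_lt_sub_one_of_pos (by positivity) hne
  rw [Real.log_div one_ne_zero hy.ne', Real.log_one] at h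
  have hlog : 1 - 1 / y < Real.log y := by linarith
  have hexp : (y + 1) * (1 / y) = 1 + 1 / y := by field_simp
  rw [hexp]
  linarith

noncomputable def hnum (y : ℝ) : ℝ := (y + 1) * Real.log y - 2 * (y - 1)

lemma hasDerivAt_hnum {y : ℝ} (hy : 0 < y) :
    HasDerivAt hnum (Real.log y + (y + 1) * (1 / y) - 2 * 1) y := by
  have h1 : HasDerivAt (fun z : ℝ => (z + 1) * Real.log z)
      (1 * Real.log y + (y + 1) * (1 / y)) y :=
    ((hasDerivAt_id y).add_const 1).mul (by simpa using Real.hasDerivAt_log hy.ne')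
  have h2 : HasDerivAt (fun z : ℝ => 2 * (z - 1)) (2 * 1) y :=
    ((hasDerivAt_id y).sub_const 1).const_mul 2
  exact (h1.sub h2).congr_deriv (by ring)

lemma hnum_cont : ContinuousOn hnum (Set.Ioi 0) := by
  intro y hy
  exact ((hasDerivAt_hnum hy).continuousAt).continuousWithinAt

lemma hnum_pos {x : ℝ} (hx : 1 < x) : 0 < hnum x := by
  have mono : StrictMonoOn hnum (Set.Ici 1) := by
    apply strictMonoOn_of_deriv_pos (convex_Ici 1)
    · exact hnum_cont.mono (fun y hy => Set.mem_Ioi.mpr (lt_of_lt_of_le one_pos hy))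
    · intro y hy
      rw [interior_Ici] at hy
      have hy0 : 0 < y := lt_trans one_pos hy
      rw [(hasDerivAt_hnum hy0).deriv]
      exact hprime_pos hy0 hy.ne'
  have := mono (Set.self_mem_Ici) (Set.mem_Ici.mpr hx.le) hx
  simpa [hnum] using this

lemma hnum_neg {x : ℝ} (hx0 : 0 < x) (hx : x < 1) : hnum x < 0 := by
  have mono : StrictMonoOn hnum (Set.Ioc 0 1) := by
    apply strictMonoOn_of_deriv_pos (convex_Ioc 0 1)
    · exact hnum_cont.mono (fun y hy => hy.1)
    · intro y hy
      rw [interior_Ioc] at hy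
      rw [(hasDerivAt_hnum hy.1).deriv]
      exact hprime_pos hy.1 hy.2.ne
  have := mono (Set.mem_Ioc.mpr ⟨hx0, hx.le⟩) (Set.mem_Ioc.mpr ⟨one_pos, le_refl 1⟩) hx
  simpa [hnum] using this

theorem fAL_second_deriv (x : ℝ) (hx : 0 < x) (hx1 : x ≠ 1) :
    deriv (deriv fAL) x = ((x + 1) * Real.log x - 2 * (x - 1)) / (x ^ 2 * (Real.log x) ^ 3) ∧
      0 < ((x + 1) * Real.log x - 2 * (x - 1)) / (x ^ 2 * (Real.log x) ^ 3) := by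
  have hL : Real.log x ≠ 0 := log_ne_zero' hx hx1
  constructor
  · -- derivative computation
    have hopen : IsOpen {y : ℝ | 0 < y ∧ y ≠ 1} := by
      have : {y : ℝ | 0 < y ∧ y ≠ 1} = Set.Ioi 0 ∩ {(1:ℝ)}ᶜ := by
        ext y; simp [Set.mem_Ioi, and_comm]
      rw [this]
      exact isOpen_Ioi.inter isOpen_compl_singleton
    have hmem : x ∈ {y : ℝ | 0 < y ∧ y ≠ 1} := ⟨hx, hx1⟩
    have heq : deriv fAL =ᶠ[nhds x]
        (fun y => 1/2 - (Real.log y - (y - 1) / y) / (Real.log y) ^ 2) := by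
      filter_upwards [hopen.mem_nhds hmem] with y hy
      exact deriv_fAL hy.1 hy.2
    rw [heq.deriv_eq]
    -- now compute deriv of g at x
    have hlog : HasDerivAt Real.log (1 / x) x := by
      simpa using Real.hasDerivAt_log hx.ne'
    have hu : HasDerivAt (fun y : ℝ => Real.log y - (y - 1) / y)
        (1 / x - (1 * x - (x - 1) * 1) / x ^ 2) x :=
      hlog.sub (((hasDerivAt_id x).sub_const 1).div (hasDerivAt_id x) hx.ne')
    have hv : HasDerivAt (fun y : ℝ => (Real.log y) ^ 2)
        ((2 : ℕ) * (Real.log x) ^ 1 * (1 / x)) x := by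
      simpa using (Real.hasDerivAt_log hx.ne').fun_pow 2
    have hv0 : (Real.log x) ^ 2 ≠ 0 := pow_ne_zero 2 hL
    have hg : HasDerivAt (fun y => 1/2 - (Real.log y - (y - 1) / y) / (Real.log y) ^ 2)
        (0 - ((1 / x - (1 * x - (x - 1) * 1) / x ^ 2) * (Real.log x) ^ 2 -
          (Real.log x - (x - 1) / x) * ((2 : ℕ) * (Real.log x) ^ 1 * (1 / x))) /
          ((Real.log x) ^ 2) ^ 2) x :=
      (hasDerivAt_const x (1/2 : ℝ)).sub (hu.div hv hv0)
    rw [hg.deriv]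
    field_simp
    ring
  · -- positivity
    rcases lt_or_gt_of_ne hx1 with h | h
    · have hn : (x + 1) * Real.log x - 2 * (x - 1) < 0 := hnum_neg hx h
      have hLneg : Real.log x < 0 := Real.log_neg hx h
      have hd : x ^ 2 * (Real.log x) ^ 3 < 0 :=
        mul_neg_of_pos_of_neg (by positivity) (by
          have := Odd.pow_neg (by decide : Odd 3) hLneg
          exact this)
      exact div_pos_of_neg_of_neg hn hd
    · have hn : 0 < (x + 1) * Real.log x - 2 * (x - 1) := hnum_pos h
      have hLpos : 0 < Real.log x := Real.log_pos h
      exact div_pos hn (by positivity)
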